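/- Invariance of the kernel along an orbit (the fact, following Corollary 5, that ker M(C, P) does not vary with the Euler system C): let G be a simple graph on a finite vertex set V, t a transition function on V, and v₁, …, v_k a finite sequence of vertices. Define G₀ = G, t₀ = t, and G_i = (G_{i-1})^{v_i}, t_i = (t_{i-1})^{G_{i-1}, v_i} for 1 ≤ i ≤ k. Then the right null space of M(G_k, t_k) over GF(2) equals the right null space of M(G, t), and the two matrices have the same rank over GF(2). -/

import Mathlib

open scoped Classical

/-- The three transitions at a vertex, labeled relative to an Euler system. -/
inductive Transition : Type
  | phi | chi | psi
  deriving DecidableEq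

variable {V : Type*} [Fintype V] [DecidableEq V]

/-- Simple local complement `G^v`: toggle adjacency between distinct neighbors of `v`. -/
def localComp (G : SimpleGraph V) (v : V) : SimpleGraph V where
  Adj u w := u ≠ w ∧ Xor' (G.Adj u w) (G.Adj v u ∧ G.Adj v w)
  symm := by
    constructor
    rintro u w ⟨hne, hx⟩
    refine ⟨hne.symm, ?_⟩
    rw [G.adj_comm w u, and_comm]
    exact hx
  loopless := by constructor; rintro u ⟨hne, _⟩; exact hne rfl

/-- Modified interlacement matrix `M(G, t)` over GF(2). -/
noncomputable def Mmat (G : SimpleGraph V) (t : V → Transition) : Matrix V V (ZMod 2) :=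
  Matrix.of fun w u =>
    if w = u then (if t u = Transition.chi then 0 else 1)
    else if t u = Transition.phi then 0
    else if G.Adj w u then 1 else 0

/-- Updated transition function `t^{G,v}`. -/
noncomputable def updT (G : SimpleGraph V) (v : V) (t : V → Transition) : V → Transition :=
  fun u =>
    if u = v then
      match t u with
      | Transition.phi => Transition.psi
      | Transition.psi => Transition.phi
      | Transition.chi => Transition.chi
    else if G.Adj v u then
      match t u with
      | Transition.chi => Transition.psi
      | Transition.psi => Transition.chi
      | Transition.phi => Transition.phi
    else t u

/-- Modified local complement of a matrix, taken with respect to `G` at `v`: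
add row `v` to the row of every neighbor of `v` in `G`. -/
noncomputable def modLC (G : SimpleGraph V) (v : V) (M : Matrix V V (ZMod 2)) :
    Matrix V V (ZMod 2) :=
  Matrix.of fun w u => if G.Adj v w then M w u + M v u else M w u

/-- One κ-step at `v` applied to a graph together with a transition function:
`(G, t) ↦ (G^v, t^{G,v})`. -/
noncomputable def stepGT (v : V) (p : SimpleGraph V × (V → Transition)) :
    SimpleGraph V × (V → Transition) :=
  (localComp p.1 v, updT p.1 v p.2)

lemma localComp_adj (G : SimpleGraph V) (v w u : V) :
    (localComp G v).Adj w u ↔ w ≠ u ∧ Xor' (G.Adj w u) (G.Adj v w ∧ G.Adj v u) := Iff.rfl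

set_option maxRecDepth 10000 in
lemma step_eq (G : SimpleGraph V) (v : V) (t : V → Transition) :
    Mmat (localComp G v) (updT G v t) = modLC G v (Mmat G t) := by
  ext w u
  simp only [Mmat, modLC, Matrix.of_apply, updT, localComp_adj]
  have tri : t u = Transition.phi ∨ t u = Transition.chi ∨ t u = Transition.psi := by
    cases t u <;> simp
  rcases tri with htu|htu|htu <;> simp only [htu] <;> clear htu <;>
    by_cases hwu : w = u <;> by_cases huv : u = v <;> by_cases hwv : w = v <;>
    by_cases hw : G.Adj v w <;> by_cases hu : G.Adj v u <;>
    by_cases ha : G.Adj w u <;>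
    simp_all [Xor', eq_comm, SimpleGraph.adj_comm] <;> decide

lemma modLC_modLC (G : SimpleGraph V) (v : V) (M : Matrix V V (ZMod 2)) :
    modLC G v (modLC G v M) = M := by
  have h2 : ∀ a b : ZMod 2, a + b + b = a := by decide
  ext w u
  simp only [modLC, Matrix.of_apply, if_neg (G.irrefl (v := v))]
  by_cases h : G.Adj v w <;> simp [h, h2]

lemma mulVec_modLC (G : SimpleGraph V) (v : V) (M : Matrix V V (ZMod 2))
    (x : V → ZMod 2) (w : V) :
    (modLC G v M).mulVec x w = M.mulVec x w + if G.Adj v w then M.mulVec x v else 0 := by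
  simp only [Matrix.mulVec, dotProduct, modLC, Matrix.of_apply]
  by_cases h : G.Adj v w
  · simp [h, add_mul, Finset.sum_add_distrib]
  · simp [h]

lemma ker_modLC_subset (G : SimpleGraph V) (v : V) (M : Matrix V V (ZMod 2)) :
    {x : V → ZMod 2 | M.mulVec x = 0} ⊆ {x | (modLC G v M).mulVec x = 0} := by
  intro x hx
  have hx' : M.mulVec x = 0 := hx
  show (modLC G v M).mulVec x = 0
  funext w
  rw [mulVec_modLC]
  simp [hx']

lemma ker_modLC (G : SimpleGraph V) (v : V) (M : Matrix V V (ZMod 2)) :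
    {x : V → ZMod 2 | (modLC G v M).mulVec x = 0} = {x | M.mulVec x = 0} := by
  apply Set.Subset.antisymm
  · have := ker_modLC_subset G v (modLC G v M)
    rwa [modLC_modLC] at this
  · exact ker_modLC_subset G v M

lemma rank_eq_of_ker_eq (A B : Matrix V V (ZMod 2))
    (h : {x : V → ZMod 2 | A.mulVec x = 0} = {x | B.mulVec x = 0}) : A.rank = B.rank := by
  have hk : LinearMap.ker A.mulVecLin = LinearMap.ker B.mulVecLin := by
    ext x
    simp only [LinearMap.mem_ker, Matrix.mulVecLin_apply]
    constructor
    · intro hx; exact (Set.ext_iff.mp h x).mp hx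
    · intro hx; exact (Set.ext_iff.mp h x).mpr hx
  have ha := A.mulVecLin.finrank_range_add_finrank_ker
  have hb := B.mulVecLin.finrank_range_add_finrank_ker
  rw [hk] at ha
  unfold Matrix.rank
  omega

lemma ker_step (G : SimpleGraph V) (v : V) (t : V → Transition) :
    {x : V → ZMod 2 | (Mmat (localComp G v) (updT G v t)).mulVec x = 0} =
      {x | (Mmat G t).mulVec x = 0} := by
  rw [step_eq, ker_modLC]

lemma ker_orbit (vs : List V) : ∀ (G : SimpleGraph V) (t : V → Transition),
    {x : V → ZMod 2 | (Mmat (vs.foldl (fun q v => stepGT v q) (G, t)).1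
        (vs.foldl (fun q v => stepGT v q) (G, t)).2).mulVec x = 0} =
      {x | (Mmat G t).mulVec x = 0} := by
  induction vs with
  | nil => intro G t; rfl
  | cons v rest ih =>
    intro G t
    rw [List.foldl_cons]
    have h1 := ih (localComp G v) (updT G v t)
    have h2 : stepGT v (G, t) = (localComp G v, updT G v t) := rfl
    rw [h2, h1, ker_step]

/-- invariance of the kernel along a κ-orbit: with `G₀ = G`, `t₀ = t`,
`G_i = G_{i-1}^{v_i}`, `t_i = t_{i-1}^{G_{i-1},v_i}`, the matrices `M(G_k, t_k)` and
`M(G, t)` have the same right null space and the same rank over GF(2). -/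
theorem ker_rank_orbit (G : SimpleGraph V) (t : V → Transition) (vs : List V) :
    let p := vs.foldl (fun q v => stepGT v q) (G, t)
    {x : V → ZMod 2 | (Mmat p.1 p.2).mulVec x = 0} =
      {x : V → ZMod 2 | (Mmat G t).mulVec x = 0} ∧
    (Mmat p.1 p.2).rank = (Mmat G t).rank := by
  intro p
  have hker := ker_orbit vs G t
  exact ⟨hker, rank_eq_of_ker_eq _ _ hker⟩
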